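/- Let q₁ = 1/2 and let q₂ take values 0.7 and 0.3 each with probability 1/2, with P(Y=1 | q₂) = q₂. Define the min-aggregated truthful scalar min(q₁, q₂) and the non-truthful trace G₁ = 1, G₂ = q₂ with min(G₁, G₂) = q₂. Then E[(min(G₁,G₂) − Y)²] < E[(min(q₁,q₂) − Y)²], with the expected-loss gap equal to 0.02. -/

import Mathlib

open MeasureTheory

theorem min_aggregator_truthful_trace_suboptimal
    {Ω : Type*} {m0 : MeasurableSpace Ω} (μ : Measure Ω) [IsProbabilityMeasure μ]
    (Y q₂ : Ω → ℝ) (hY : Measurable Y) (hq₂ : Measurable q₂)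
    (hY01 : ∀ ω, Y ω = 0 ∨ Y ω = 1)
    (hq₂vals : ∀ ω, q₂ ω = 0.7 ∨ q₂ ω = 0.3)
    (h07 : μ {ω | q₂ ω = 0.7} = 1/2)
    (h03 : μ {ω | q₂ ω = 0.3} = 1/2)
    -- P(Y = 1 | q₂) = q₂
    (hcond : μ[Y | MeasurableSpace.comap q₂ inferInstance] =ᵐ[μ] q₂) :
    (∫ ω, (min 1 (q₂ ω) - Y ω)^2 ∂μ) < (∫ ω, (min (1/2) (q₂ ω) - Y ω)^2 ∂μ)
    ∧ (∫ ω, (min (1/2) (q₂ ω) - Y ω)^2 ∂μ)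
        = (∫ ω, (min 1 (q₂ ω) - Y ω)^2 ∂μ) + 0.02 := by
  have hm : MeasurableSpace.comap q₂ inferInstance ≤ m0 := hq₂.comap_le
  set A : Set Ω := q₂ ⁻¹' {0.7} with hA_def
  have hA : MeasurableSet A := hq₂ (measurableSet_singleton _)
  have hAm : MeasurableSet[MeasurableSpace.comap q₂ inferInstance] A :=
    ⟨{0.7}, measurableSet_singleton _, rfl⟩
  have hμA : μ A = 1/2 := h07
  have hμAr : (μ A).toReal = 1/2 := by rw [hμA]; simp
  -- integrability
  have hYint : Integrable Y μ := by
    refine (integrable_const (1 : ℝ)).mono' hY.aestronglyMeasurable ?_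
    filter_upwards with ω
    rcases hY01 ω with h | h <;> simp [h]
  have hq₂int : Integrable q₂ μ := by
    refine (integrable_const (1 : ℝ)).mono' hq₂.aestronglyMeasurable ?_
    filter_upwards with ω
    rcases hq₂vals ω with h | h <;> rw [h] <;> norm_num
  have hindint : Integrable (fun ω => A.indicator (fun _ => (1 : ℝ)) ω) μ :=
    (integrable_const (1 : ℝ)).indicator hA
  have hAYint : Integrable (fun ω => A.indicator Y ω) μ := hYint.indicator hA
  -- compute ∫_A Y
  have hsetA : ∫ ω in A, Y ω ∂μ = 0.35 := by
    have h1 : ∫ ω in A, Y ω ∂μ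
        = ∫ ω in A, (μ[Y | MeasurableSpace.comap q₂ inferInstance]) ω ∂μ :=
      (setIntegral_condExp hm hYint hAm).symm
    have h2 : ∫ ω in A, (μ[Y | MeasurableSpace.comap q₂ inferInstance]) ω ∂μ
        = ∫ ω in A, q₂ ω ∂μ :=
      integral_congr_ae (ae_restrict_of_ae hcond)
    have h3 : ∫ ω in A, q₂ ω ∂μ = ∫ ω in A, (0.7 : ℝ) ∂μ :=
      setIntegral_congr_fun hA fun ω hω => hω
    rw [h1, h2, h3, setIntegral_const, measureReal_def, hμAr]
    norm_num
  -- compute ∫ Y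
  have hY_tot : ∫ ω, Y ω ∂μ = 0.5 := by
    have h1 : ∫ ω, Y ω ∂μ = ∫ ω, q₂ ω ∂μ := by
      rw [← integral_condExp hm (f := Y)]
      exact integral_congr_ae hcond
    have h2 : ∫ ω, q₂ ω ∂μ = ∫ ω in A, q₂ ω ∂μ + ∫ ω in Aᶜ, q₂ ω ∂μ :=
      (integral_add_compl hA hq₂int).symm
    have h3 : ∫ ω in A, q₂ ω ∂μ = 0.35 := by
      have h3' : ∫ ω in A, q₂ ω ∂μ = ∫ ω in A, (0.7 : ℝ) ∂μ :=
        setIntegral_congr_fun hA fun ω hω => hω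
      rw [h3', setIntegral_const, measureReal_def, hμAr]; norm_num
    have hμAc : (μ Aᶜ).toReal = 1/2 := by
      have : μ Aᶜ = 1 - 1/2 := by
        rw [measure_compl hA (measure_ne_top μ A), measure_univ, hμA]
      rw [this]
      norm_num
    have h4 : ∫ ω in Aᶜ, q₂ ω ∂μ = 0.15 := by
      have h4' : ∫ ω in Aᶜ, q₂ ω ∂μ = ∫ ω in Aᶜ, (0.3 : ℝ) ∂μ := by
        refine setIntegral_congr_fun hA.compl ?_
        intro ω hω
        rcases hq₂vals ω with h | h
        · exact absurd h hω
        · exact h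
      rw [h4', setIntegral_const, measureReal_def, hμAc]; norm_num
    rw [h1, h2, h3, h4]; norm_num
  have hAY : ∫ ω, A.indicator Y ω ∂μ = 0.35 := by
    rw [integral_indicator hA]; exact hsetA
  have hind : ∫ ω, A.indicator (fun _ => (1 : ℝ)) ω ∂μ = 0.5 := by
    rw [integral_indicator hA, setIntegral_const, measureReal_def, hμAr]; norm_num
  -- integrability of the affine combinations
  have hint1 : Integrable
      (fun ω => 0.09 + 0.4 * Y ω + 0.4 * A.indicator (fun _ => (1 : ℝ)) ω) μ :=
    ((integrable_const _).add (hYint.const_mul _)).add (hindint.const_mul _)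
  have hint2 : Integrable
      (fun ω => 0.09 + 0.4 * Y ω + 0.16 * A.indicator (fun _ => (1 : ℝ)) ω) μ :=
    ((integrable_const _).add (hYint.const_mul _)).add (hindint.const_mul _)
  have hint3 : Integrable (fun ω => (0.8 : ℝ) * A.indicator Y ω) μ :=
    hAYint.const_mul _
  have hint4 : Integrable (fun ω => (0.4 : ℝ) * A.indicator Y ω) μ :=
    hAYint.const_mul _
  have hint5 : Integrable (fun ω => (0.09 : ℝ) + 0.4 * Y ω) μ :=
    (integrable_const _).add (hYint.const_mul _)
  -- pointwise decompositions
  have hf₁ : ∀ ω, (min 1 (q₂ ω) - Y ω)^2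
      = 0.09 + 0.4 * Y ω + 0.4 * A.indicator (fun _ => (1 : ℝ)) ω
        - 0.8 * A.indicator Y ω := by
    intro ω
    rcases hq₂vals ω with h | h
    · have hmem : ω ∈ A := h
      rcases hY01 ω with h' | h' <;>
        · simp only [Set.indicator_of_mem hmem, h, h']
          norm_num
    · have hnot : ω ∉ A := by
        simp only [hA_def, Set.mem_preimage, Set.mem_singleton_iff, h]
        norm_num
      rcases hY01 ω with h' | h' <;>
        · simp only [Set.indicator_of_notMem hnot, h, h']
          norm_num
  have hf₂ : ∀ ω, (min (1/2) (q₂ ω) - Y ω)^2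
      = 0.09 + 0.4 * Y ω + 0.16 * A.indicator (fun _ => (1 : ℝ)) ω
        - 0.4 * A.indicator Y ω := by
    intro ω
    rcases hq₂vals ω with h | h
    · have hmem : ω ∈ A := h
      rcases hY01 ω with h' | h' <;>
        · simp only [Set.indicator_of_mem hmem, h, h']
          norm_num
    · have hnot : ω ∉ A := by
        simp only [hA_def, Set.mem_preimage, Set.mem_singleton_iff, h]
        norm_num
      rcases hY01 ω with h' | h' <;>
        · simp only [Set.indicator_of_notMem hnot, h, h']
          norm_num
  have hI₁ : (∫ ω, (min 1 (q₂ ω) - Y ω)^2 ∂μ) = 0.21 := by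
    rw [integral_congr_ae (Filter.Eventually.of_forall hf₁)]
    rw [integral_sub hint1 hint3, integral_add hint5 (hindint.const_mul _),
      integral_add (integrable_const _) (hYint.const_mul _),
      integral_const_mul, integral_const_mul, integral_const_mul,
      hY_tot, hind, hAY, integral_const]
    simp
    norm_num
  have hI₂ : (∫ ω, (min (1/2) (q₂ ω) - Y ω)^2 ∂μ) = 0.23 := by
    rw [integral_congr_ae (Filter.Eventually.of_forall hf₂)]
    rw [integral_sub hint2 hint4, integral_add hint5 (hindint.const_mul _),
      integral_add (integrable_const _) (hYint.const_mul _),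
      integral_const_mul, integral_const_mul, integral_const_mul,
      hY_tot, hind, hAY, integral_const]
    simp
    norm_num
  rw [hI₁, hI₂]
  norm_num
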